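/- Let C > 0, K(φ) = 2φ³(1-φ)², and φ^eq(ξ) = (1/2)(1 + tanh(ξ/(C√2))). Then ∫_ℝ (4/C) K(φ^eq(ξ)) dξ = √2/3. In particular, with W(φ)=2φ²(1-φ)², ∫_ℝ (2/C)W(φ^eq) dξ = ∫_ℝ (4/C)K(φ^eq) dξ. -/

import Mathlib

noncomputable def W (φ : ℝ) : ℝ := 2 * φ ^ 2 * (1 - φ) ^ 2

noncomputable def K (φ : ℝ) : ℝ := 2 * φ ^ 3 * (1 - φ) ^ 2

noncomputable def phiEq (C ξ : ℝ) : ℝ := (1 + Real.tanh (ξ / (C * Real.sqrt 2))) / 2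

open MeasureTheory Filter Set

lemma my_hasDerivAt_tanh (x : ℝ) :
    HasDerivAt Real.tanh (1 - Real.tanh x ^ 2) x := by
  have hc := Real.cosh_pos x
  have h : HasDerivAt (fun y => Real.sinh y / Real.cosh y)
      ((Real.cosh x * Real.cosh x - Real.sinh x * Real.sinh x) / Real.cosh x ^ 2) x :=
    (Real.hasDerivAt_sinh x).div (Real.hasDerivAt_cosh x) hc.ne'
  have heq : (fun y => Real.sinh y / Real.cosh y) = Real.tanh := by
    funext y; rw [Real.tanh_eq_sinh_div_cosh]
  rw [heq] at h
  convert h using 1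
  rw [Real.tanh_eq_sinh_div_cosh]
  have h1 := Real.cosh_sq_sub_sinh_sq x
  field_simp

lemma my_tanh_lower (x : ℝ) : -1 < Real.tanh x := by
  rw [Real.tanh_eq_sinh_div_cosh, lt_div_iff₀ (Real.cosh_pos x)]
  nlinarith [Real.sinh_add_cosh x, Real.exp_pos x]

lemma my_tanh_eq (x : ℝ) :
    Real.tanh x = (1 - Real.exp (-(2 * x))) / (1 + Real.exp (-(2 * x))) := by
  have h0 : Real.exp x ≠ 0 := (Real.exp_pos x).ne'
  have hden : (0:ℝ) < 1 + Real.exp (-(2 * x)) := by positivity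
  have hx2 : Real.exp (-(2 * x)) = (Real.exp x * Real.exp x)⁻¹ := by
    rw [← Real.exp_add, ← Real.exp_neg]
    ring_nf
  rw [Real.tanh_eq_sinh_div_cosh, Real.sinh_eq, Real.cosh_eq, hx2, Real.exp_neg]
  field_simp

lemma my_tanh_tendsto_atTop : Tendsto Real.tanh atTop (nhds 1) := by
  have h1 : Tendsto (fun x : ℝ => -(2 * x)) atTop atBot := by
    apply tendsto_neg_atTop_atBot.comp
    exact (tendsto_id (α := ℝ)).const_mul_atTop (by norm_num : (0:ℝ) < 2)
  have h2 : Tendsto (fun x : ℝ => Real.exp (-(2 * x))) atTop (nhds 0) :=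
    Real.tendsto_exp_atBot.comp h1
  have h3 : Tendsto (fun x : ℝ => (1 - Real.exp (-(2 * x))) / (1 + Real.exp (-(2 * x))))
      atTop (nhds ((1 - 0) / (1 + 0))) :=
    (tendsto_const_nhds.sub h2).div (tendsto_const_nhds.add h2) (by norm_num)
  have h4 : ((1:ℝ) - 0) / (1 + 0) = 1 := by norm_num
  rw [h4] at h3
  convert h3 using 2 with x
  exact my_tanh_eq x

lemma my_tanh_tendsto_atBot : Tendsto Real.tanh atBot (nhds (-1)) := by
  have h1 : Tendsto (fun x : ℝ => Real.tanh (-x)) atBot (nhds 1) :=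
    my_tanh_tendsto_atTop.comp tendsto_neg_atBot_atTop
  have h2 : Tendsto (fun x : ℝ => -Real.tanh x) atBot (nhds 1) := by
    convert h1 using 2 with x
    rw [Real.tanh_neg]
  have := h2.neg
  simpa using this

/-- FTC on the whole line for nonnegative derivatives. -/
lemma my_integral_key (F f : ℝ → ℝ) (hd : ∀ x, HasDerivAt F (f x) x)
    (hpos : ∀ x, 0 ≤ f x) (m n : ℝ)
    (hbot : Tendsto F atBot (nhds m)) (htop : Tendsto F atTop (nhds n)) :
    ∫ x, f x = n - m := by
  have h1 : IntegrableOn f (Ioi (0:ℝ)) :=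
    integrableOn_Ioi_deriv_of_nonneg' (fun x _ => hd x) (fun x _ => hpos x) htop
  have hd2 : ∀ x : ℝ, HasDerivAt (fun y => -F (-y)) (f (-x)) x := by
    intro x
    have h := ((hd (-x)).comp x (hasDerivAt_neg x)).neg
    simpa [Function.comp_def, Pi.neg_def] using h
  have htop2 : Tendsto (fun y : ℝ => -F (-y)) atTop (nhds (-m)) := by
    exact (hbot.comp tendsto_neg_atTop_atBot).neg
  have h2' : IntegrableOn (fun x => f (-x)) (Ioi (0:ℝ)) :=
    integrableOn_Ioi_deriv_of_nonneg' (fun x _ => hd2 x) (fun x _ => hpos _) htop2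
  have h2 : IntegrableOn f (Iic (0:ℝ)) := by
    rw [← Measure.map_neg_eq_self (volume : Measure ℝ)]
    have me : MeasurableEmbedding fun x : ℝ => -x :=
      (Homeomorph.neg ℝ).measurableEmbedding
    rw [me.integrableOn_map_iff]
    simp only [Function.comp_def, neg_preimage, neg_Iic, neg_zero]
    exact (integrableOn_Ici_iff_integrableOn_Ioi).mpr h2'
  have hint : Integrable f := by
    rw [← integrableOn_univ, ← Iic_union_Ioi (a := (0:ℝ))]
    exact h2.union h1
  exact integral_of_hasDerivAt_of_tendsto hd hint hbot htop

lemma my_poly_deriv (a b c d : ℝ) (y : ℝ) :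
    HasDerivAt (fun y : ℝ => a * y + b * y ^ 2 + c * y ^ 3 + d * y ^ 4)
      (a + 2 * b * y + 3 * c * y ^ 2 + 4 * d * y ^ 3) y := by
  have h : HasDerivAt (fun y : ℝ => a * y + b * y ^ 2 + c * y ^ 3 + d * y ^ 4)
      (a * 1 + (b * ((2:ℕ) * y ^ 1) + (c * ((3:ℕ) * y ^ 2) + d * ((4:ℕ) * y ^ 3)))) y := by
    exact ((((hasDerivAt_id y).const_mul a).add
      (((hasDerivAt_pow 2 y).const_mul b))).add
      ((hasDerivAt_pow 3 y).const_mul c)).add ((hasDerivAt_pow 4 y).const_mul d) |>.congr_deriv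
      (by push_cast; ring)
  convert h using 1
  push_cast
  ring

lemma my_tanh_comp_deriv (C : ℝ) (hC : 0 < C) (ξ : ℝ) :
    HasDerivAt (fun ξ : ℝ => Real.tanh (ξ / (C * Real.sqrt 2)))
      ((1 - Real.tanh (ξ / (C * Real.sqrt 2)) ^ 2) / (C * Real.sqrt 2)) ξ := by
  have hc : (0:ℝ) < C * Real.sqrt 2 := by positivity
  have h1 : HasDerivAt (fun ξ : ℝ => ξ / (C * Real.sqrt 2)) (1 / (C * Real.sqrt 2)) ξ :=
    (hasDerivAt_id ξ).div_const _
  have h := (my_hasDerivAt_tanh (ξ / (C * Real.sqrt 2))).comp ξ h1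
  exact h.congr_deriv (by ring)

lemma my_half_integral (C : ℝ) (hC : 0 < C) (a b c d : ℝ)
    (f : ℝ → ℝ)
    (heq : ∀ t : ℝ, -1 < t →
      (a + 2 * b * t + 3 * c * t ^ 2 + 4 * d * t ^ 3) * ((1 - t ^ 2) / (C * Real.sqrt 2))
        = f ((1 + t) / 2))
    (hpos : ∀ ξ : ℝ, 0 ≤ f (phiEq C ξ)) :
    ∫ ξ : ℝ, f (phiEq C ξ)
      = (a * 1 + b * 1 + c * 1 + d * 1) - (a * (-1) + b * 1 + c * (-1) + d * 1) := by
  set P : ℝ → ℝ := fun y => a * y + b * y ^ 2 + c * y ^ 3 + d * y ^ 4 with hP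
  have hc : (0:ℝ) < C * Real.sqrt 2 := by positivity
  have hd : ∀ ξ : ℝ, HasDerivAt (fun ξ => P (Real.tanh (ξ / (C * Real.sqrt 2))))
      (f (phiEq C ξ)) ξ := by
    intro ξ
    have h := (my_poly_deriv a b c d (Real.tanh (ξ / (C * Real.sqrt 2)))).comp ξ
      (my_tanh_comp_deriv C hC ξ)
    have hval := heq (Real.tanh (ξ / (C * Real.sqrt 2)))
      (my_tanh_lower (ξ / (C * Real.sqrt 2)))
    rw [hval] at h
    exact h
  -- limits
  have hdiv : Tendsto (fun ξ : ℝ => ξ / (C * Real.sqrt 2)) atTop atTop :=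
    tendsto_id.atTop_div_const hc
  have hdivb : Tendsto (fun ξ : ℝ => ξ / (C * Real.sqrt 2)) atBot atBot :=
    tendsto_id.atBot_div_const hc
  have hPc : Continuous P := by
    simp only [hP]; continuity
  have htop : Tendsto (fun ξ => P (Real.tanh (ξ / (C * Real.sqrt 2)))) atTop (nhds (P 1)) :=
    (hPc.tendsto 1).comp (my_tanh_tendsto_atTop.comp hdiv)
  have hbot : Tendsto (fun ξ => P (Real.tanh (ξ / (C * Real.sqrt 2)))) atBot
      (nhds (P (-1))) :=
    (hPc.tendsto (-1)).comp (my_tanh_tendsto_atBot.comp hdivb)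
  have := my_integral_key _ _ hd hpos (P (-1)) (P 1) hbot htop
  rw [this]
  simp only [hP]
  ring

lemma my_phiEq_nonneg (C ξ : ℝ) : 0 ≤ phiEq C ξ := by
  have := my_tanh_lower (ξ / (C * Real.sqrt 2))
  unfold phiEq
  linarith

lemma my_sqrt2_sq : Real.sqrt 2 * Real.sqrt 2 = 2 :=
  Real.mul_self_sqrt (by norm_num)

theorem stmt_11 (C : ℝ) (hC : 0 < C) :
    (∫ ξ : ℝ, (4 / C) * K (phiEq C ξ)) = Real.sqrt 2 / 3 ∧
    (∫ ξ : ℝ, (2 / C) * W (phiEq C ξ)) = ∫ ξ : ℝ, (4 / C) * K (phiEq C ξ) := by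
  have hC' : C ≠ 0 := hC.ne'
  have hs2 : Real.sqrt 2 ≠ 0 := by positivity
  have hs2sq := my_sqrt2_sq
  have hK : (∫ ξ : ℝ, (4 / C) * K (phiEq C ξ)) = Real.sqrt 2 / 3 := by
    have h := my_half_integral C hC (Real.sqrt 2 / 4) (Real.sqrt 2 / 8)
        (-(Real.sqrt 2 / 12)) (-(Real.sqrt 2 / 16)) (fun φ => (4 / C) * K φ)
        (fun t _ => by
          simp only [K]
          field_simp
          nlinarith [hs2sq, sq_nonneg t])
        (fun ξ => by
          have h1 := my_phiEq_nonneg C ξ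
          have : (0:ℝ) ≤ K (phiEq C ξ) := by
            unfold K
            have := sq_nonneg (1 - phiEq C ξ)
            nlinarith [pow_nonneg h1 3]
          positivity)
    rw [h]
    ring_nf
  refine ⟨hK, ?_⟩
  have hW : (∫ ξ : ℝ, (2 / C) * W (phiEq C ξ)) = Real.sqrt 2 / 3 := by
    have h := my_half_integral C hC (Real.sqrt 2 / 4) 0
        (-(Real.sqrt 2 / 12)) 0 (fun φ => (2 / C) * W φ)
        (fun t _ => by
          simp only [W]
          field_simp
          nlinarith [hs2sq, sq_nonneg t])
        (fun ξ => by
          have : (0:ℝ) ≤ W (phiEq C ξ) := by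
            unfold W
            nlinarith [sq_nonneg (phiEq C ξ), sq_nonneg (1 - phiEq C ξ),
              mul_nonneg (sq_nonneg (phiEq C ξ)) (sq_nonneg (1 - phiEq C ξ))]
          positivity)
    rw [h]
    ring_nf
  rw [hW, hK]
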